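/- Let X be a metric space. Then there exists a bornologous injection from ℤ (with its usual metric) into X if and only if there exists an injective group homomorphism from the wobbling group W(ℤ) into the wobbling group W(X). -/

import Mathlib

/-- The wobbling group of a metric space: all permutations of bounded displacement. -/
def Wobbling (X : Type*) [MetricSpace X] : Subgroup (Equiv.Perm X) where
  carrier := {α : Equiv.Perm X | ∃ r : ℝ, ∀ x : X, dist x (α x) ≤ r}
  one_mem' := ⟨0, fun x => by simp⟩
  mul_mem' := by
    rintro a b ⟨r, hr⟩ ⟨s, hs⟩
    exact ⟨s + r, fun x =>
      (dist_triangle x (b x) (a (b x))).trans (add_le_add (hs x) (hr (b x)))⟩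
  inv_mem' := by
    rintro a ⟨r, hr⟩
    refine ⟨r, fun x => ?_⟩
    have := hr (a⁻¹ x)
    simpa [dist_comm] using this

/-- A map between metric spaces is bornologous if it maps pairs at uniformly bounded
distance to pairs at uniformly bounded distance. -/
def Bornologous {X Y : Type*} [MetricSpace X] [MetricSpace Y] (f : X → Y) : Prop :=
  ∀ r : ℝ, ∃ s : ℝ, ∀ x y : X, dist x y ≤ r → dist (f x) (f y) ≤ s

/-- fold of ℤ into ℕ -/
def zfold (a : ℤ) : ℕ := (2*a).toNat + (-(2*a) - 1).toNat

lemma zfold_inj : Function.Injective zfold := by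
  intro a b h
  simp only [zfold] at h
  omega

lemma zfold_bound (a b : ℤ) : |((zfold a : ℤ)) - (zfold b : ℤ)| ≤ 2 * |a - b| + 1 := by
  rw [Int.abs_eq_natAbs, Int.abs_eq_natAbs]
  simp only [zfold]
  omega

lemma zfold_bound_real (a b : ℤ) : |((zfold a : ℝ)) - (zfold b : ℝ)| ≤ 2 * |(a:ℝ) - (b:ℝ)| + 1 := by
  have := zfold_bound a b
  exact_mod_cast this

lemma born_of_chain {X : Type*} [MetricSpace X] (r : ℝ) (hr : 0 ≤ r) (c : ℕ → X)
    (hc : ∀ n, dist (c n) (c (n+1)) ≤ r) (hinj : Function.Injective c) :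
    ∃ f : ℤ → X, Function.Injective f ∧ Bornologous f := by
  have aux : ∀ d m, dist (c m) (c (m + d)) ≤ r * d := by
    intro d
    induction d with
    | zero => intro m; simp
    | succ d ih =>
      intro m
      have h1 := ih m
      have h2 := hc (m + d)
      calc dist (c m) (c (m + (d+1))) ≤ dist (c m) (c (m+d)) + dist (c (m+d)) (c (m+d+1)) := by
            rw [show m + (d+1) = m + d + 1 from rfl]; exact dist_triangle _ _ _
        _ ≤ r * d + r := add_le_add h1 h2
        _ ≤ r * ((d:ℕ)+1:ℕ) := by push_cast; linarith
  have key : ∀ m n : ℕ, dist (c m) (c n) ≤ r * |(m:ℝ) - (n:ℝ)| := by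
    intro m n
    rcases le_total m n with h | h
    · obtain ⟨d, rfl⟩ := Nat.exists_eq_add_of_le h
      calc dist (c m) (c (m + d)) ≤ r * d := aux d m
        _ ≤ r * |(m:ℝ) - (m+d:ℕ)| := by
            apply mul_le_mul_of_nonneg_left _ hr
            push_cast
            rw [abs_sub_comm]
            rw [abs_of_nonneg (by linarith)]
            linarith
    · obtain ⟨d, rfl⟩ := Nat.exists_eq_add_of_le h
      rw [dist_comm]
      calc dist (c n) (c (n + d)) ≤ r * d := aux d n
        _ ≤ r * |(n+d:ℕ) - (n:ℝ)| := by
            apply mul_le_mul_of_nonneg_left _ hr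
            push_cast
            rw [abs_of_nonneg (by linarith)]
            linarith
  refine ⟨fun a => c (zfold a), hinj.comp zfold_inj, ?_⟩
  intro r₀
  refine ⟨r * (2 * max r₀ 0 + 1), fun a b hab => ?_⟩
  have h1 := key (zfold a) (zfold b)
  have h2 := zfold_bound_real a b
  have h3 : |(a:ℝ) - (b:ℝ)| ≤ max r₀ 0 := by
    rw [Int.dist_eq] at hab
    exact le_trans hab (le_max_left _ _)
  calc dist (c (zfold a)) (c (zfold b)) ≤ r * |(zfold a : ℝ) - (zfold b : ℝ)| := h1
    _ ≤ r * (2 * max r₀ 0 + 1) := by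
        apply mul_le_mul_of_nonneg_left _ hr
        linarith

-- case (a): an infinite bounded set
lemma born_of_infinite_ball {X : Type*} [MetricSpace X] (z : X) (R : ℝ)
    (h : {y : X | dist z y ≤ R}.Infinite) :
    ∃ f : ℤ → X, Function.Injective f ∧ Bornologous f := by
  classical
  let e := h.natEmbedding
  refine ⟨fun a => (e (zfold a) : X), ?_, ?_⟩
  · intro a b hab
    exact zfold_inj (by exact_mod_cast e.injective (Subtype.ext hab))
  · intro r₀
    refine ⟨R + R, fun a b _ => ?_⟩
    have h1 : dist z ((e (zfold a) : X)) ≤ R := (e (zfold a)).2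
    have h2 : dist z ((e (zfold b) : X)) ≤ R := (e (zfold b)).2
    calc dist ((e (zfold a) : X)) ((e (zfold b) : X))
        ≤ dist ((e (zfold a) : X)) z + dist z ((e (zfold b) : X)) := dist_triangle _ _ _
      _ ≤ R + R := by rw [dist_comm] at h1; exact add_le_add h1 h2

lemma born_of_infinite_component {X : Type*} [MetricSpace X] (r : ℝ) (x : X)
    (hC : {y | Relation.ReflTransGen (fun a b : X => dist a b ≤ r) x y}.Infinite) :
    ∃ f : ℤ → X, Function.Injective f ∧ Bornologous f := by
  classical
  set D : X → X → Prop := fun a b => dist a b ≤ r with hD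
  set C : Set X := {y | Relation.ReflTransGen D x y} with hCdef
  -- r is nonnegative
  obtain ⟨y₀, hy₀⟩ : ∃ y₀, y₀ ∈ C \ {x} := (hC.diff (Set.finite_singleton x)).nonempty
  have hr : 0 ≤ r := by
    rcases Relation.ReflTransGen.cases_head hy₀.1 with h | ⟨z, hz, _⟩
    · exact absurd h.symm (by simpa using hy₀.2)
    · exact le_trans dist_nonneg hz
  by_cases hball : ∃ (z : X) (R : ℝ), {y : X | dist z y ≤ R}.Infinite
  · obtain ⟨z, R, h⟩ := hball
    exact born_of_infinite_ball z R h
  push_neg at hball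
  have hfin : ∀ z : X, {y : X | dist z y ≤ r}.Finite := by
    intro z
    rcases Set.finite_or_infinite {y : X | dist z y ≤ r} with h | h
    · exact h
    · exact absurd h (Set.not_infinite.mpr (hball z r))
  -- the graph
  let G : SimpleGraph X :=
    { Adj := fun a b => a ≠ b ∧ dist a b ≤ r
      symm := ⟨fun a b h => ⟨h.1.symm, by rw [dist_comm]; exact h.2⟩⟩
      loopless := ⟨fun a h => h.1 rfl⟩ }
  have hreach : ∀ y ∈ C, G.Reachable x y := by
    intro y hy
    induction hy with
    | refl => rfl
    | @tail b c hxb hbc ih =>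
      rcases eq_or_ne b c with rfl | hne
      · exact ih
      · exact ih.trans (SimpleGraph.Adj.reachable ⟨hne, hbc⟩)
  -- finite reach sets
  let F : ℕ → Set X := fun n => Nat.rec {x} (fun _ S => ⋃ y ∈ S, {w | dist y w ≤ r}) n
  have hF0 : F 0 = {x} := rfl
  have hFs : ∀ n, F (n + 1) = ⋃ y ∈ F n, {w | dist y w ≤ r} := fun n => rfl
  have hFfin : ∀ n, (F n).Finite := by
    intro n
    induction n with
    | zero => exact Set.finite_singleton x
    | succ n ih => exact Set.Finite.biUnion ih (fun y _ => hfin y)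
  have hwalkF : ∀ (u v : X) (p : G.Walk u v) (m : ℕ), u ∈ F m → v ∈ F (m + p.length) := by
    intro u v p
    induction p with
    | nil => intro m hm; simpa using hm
    | @cons a b c hadj q ih =>
      intro m hm
      have hb : b ∈ F (m + 1) := by
        rw [hFs]
        exact Set.mem_biUnion hm hadj.2
      have := ih (m + 1) hb
      have heq : m + 1 + q.length = m + (SimpleGraph.Walk.cons hadj q).length := by
        rw [SimpleGraph.Walk.length_cons]; omega
      rwa [heq] at this
  -- arbitrarily long injective chains from x
  have Hlong : ∀ n : ℕ, ∃ l : List X,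
      (l.head? = some x ∧ l.Chain' G.Adj ∧ l.Nodup) ∧ n ≤ l.length := by
    intro n
    have hBfin : (⋃ m ∈ Finset.range (n + 1), F m).Finite :=
      Set.Finite.biUnion (Finset.range (n + 1)).finite_toSet (fun m _ => hFfin m)
    obtain ⟨y, hy⟩ := (hC.diff hBfin).nonempty
    obtain ⟨w⟩ := hreach y hy.1
    let p := w.toPath
    have hyF : y ∈ F (0 + p.1.length) := hwalkF x y p.1 0 (by rw [hF0]; rfl)
    rw [Nat.zero_add] at hyF
    have hlen : n ≤ p.1.length := by
      by_contra hcon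
      push_neg at hcon
      exact hy.2 (Set.mem_biUnion (by simp; omega : p.1.length ∈ Finset.range (n + 1)) hyF)
    refine ⟨p.1.support, ⟨?_, p.1.isChain_adj_support, p.2.support_nodup⟩, ?_⟩
    · rw [p.1.support_eq_cons]; rfl
    · rw [SimpleGraph.Walk.length_support]; omega
  -- König's lemma
  set Ch : List X → Prop := fun l => l.head? = some x ∧ l.Chain' G.Adj ∧ l.Nodup with hCh
  set Good : List X → Prop :=
    fun l => Ch l ∧ ∀ n, ∃ l', Ch l' ∧ l <+: l' ∧ n ≤ l'.length with hGood
  have hbase : Good [x] := by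
    refine ⟨⟨rfl, List.isChain_singleton x, by simp⟩, fun n => ?_⟩
    obtain ⟨l, hl, hlen⟩ := Hlong n
    refine ⟨l, hl, ?_, hlen⟩
    rcases l with _ | ⟨a, t⟩
    · simp at hl
    · obtain rfl : a = x := by simpa using hl.1
      exact ⟨t, rfl⟩
  have hstep : ∀ l, Good l → ∃ z, Good (l ++ [z]) := by
    rintro l ⟨⟨hhead, hchain, hnodup⟩, hext⟩
    have hlnil : l ≠ [] := by rintro rfl; simp at hhead
    set u := l.getLast hlnil with hu
    have hQ : ∀ n : ℕ, ∃ z, G.Adj u z ∧ ∃ l', Ch l' ∧ (l ++ [z]) <+: l' ∧ n ≤ l'.length := by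
      intro n
      obtain ⟨l', hch', hpre, hlen⟩ := hext (max n (l.length + 1))
      obtain ⟨t, rfl⟩ := hpre
      have ht : t ≠ [] := by
        rintro rfl
        simp at hlen
      obtain ⟨z, t', rfl⟩ := List.exists_cons_of_ne_nil ht
      refine ⟨z, ?_, l ++ z :: t', hch', ⟨t', by simp⟩, le_trans (le_max_left _ _) hlen⟩
      have hc := (List.isChain_append.mp hch'.2.1).2.2
      exact hc u (by rw [List.getLast?_eq_getLast_of_ne_nil hlnil]; rfl) z rfl
    have hnbrfin : Finite {w : X // G.Adj u w} :=
      Set.Finite.to_subtype ((hfin u).subset (fun w hw => hw.2))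
    let g : ℕ → {w : X // G.Adj u w} :=
      fun n => ⟨Classical.choose (hQ n), (Classical.choose_spec (hQ n)).1⟩
    obtain ⟨z0, hz0⟩ := Finite.exists_infinite_fiber g
    have hfib : {n : ℕ | g n = z0}.Infinite := by
      rw [← Set.infinite_coe_iff]
      exact hz0
    have hextz : ∀ n, ∃ l', Ch l' ∧ (l ++ [z0.1]) <+: l' ∧ n ≤ l'.length := by
      intro n
      obtain ⟨m, hm, hnm⟩ := hfib.exists_gt n
      have heq : Classical.choose (hQ m) = z0.1 := congrArg Subtype.val hm
      obtain ⟨l', h1, h2, h3⟩ := (Classical.choose_spec (hQ m)).2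
      rw [heq] at h2
      exact ⟨l', h1, h2, le_trans (le_of_lt hnm) h3⟩
    refine ⟨z0.1, ⟨?_, ?_, ?_⟩, hextz⟩
    · rcases l with _ | ⟨a, t⟩
      · simp at hhead
      · obtain rfl : a = x := by simpa using hhead
        rfl
    · obtain ⟨l', h1, h2, _⟩ := hextz 0
      exact h1.2.1.prefix h2
    · obtain ⟨l', h1, h2, _⟩ := hextz 0
      exact h1.2.2.sublist h2.sublist
  -- build the infinite chain
  let next : {l : List X // Good l} → {l : List X // Good l} :=
    fun p => ⟨p.1 ++ [Classical.choose (hstep p.1 p.2)], Classical.choose_spec (hstep p.1 p.2)⟩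
  let seq : ℕ → {l : List X // Good l} := fun n => next^[n] ⟨[x], hbase⟩
  have hseqs : ∀ n, seq (n + 1) = next (seq n) := fun n => Function.iterate_succ_apply' _ _ _
  have hlen : ∀ n, (seq n).1.length = n + 1 := by
    intro n
    induction n with
    | zero => rfl
    | succ n ih =>
      rw [hseqs n]
      show ((seq n).1 ++ [_]).length = n + 1 + 1
      rw [List.length_append, ih]
      simp
  have hpre : ∀ m n, m ≤ n → (seq m).1 <+: (seq n).1 := by
    intro m n h
    induction n, h using Nat.le_induction with
    | base => exact List.prefix_refl _
    | succ n hmn ih =>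
      refine ih.trans ?_
      rw [hseqs n]
      exact ⟨[Classical.choose (hstep (seq n).1 (seq n).2)], rfl⟩
  have hcidx : ∀ n, n < (seq n).1.length := by intro n; rw [hlen]; omega
  let c : ℕ → X := fun n => (seq n).1[n]'(hcidx n)
  have hcg : ∀ m n, (h : m ≤ n) → c m = (seq n).1[m]'(by rw [hlen]; omega) := by
    intro m n h
    exact (hpre m n h).getElem (hcidx m)
  have hinj : Function.Injective c := by
    intro a b hab
    rcases le_total a b with h | h
    · have h1 := hcg a b h
      have h2 : c b = (seq b).1[b]'(hcidx b) := rfl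
      rw [h1, h2] at hab
      exact (seq b).2.1.2.2.getElem_inj_iff.mp hab
    · have h1 := hcg b a h
      have h2 : c a = (seq a).1[a]'(hcidx a) := rfl
      rw [h1, h2] at hab
      exact (seq a).2.1.2.2.getElem_inj_iff.mp hab
  have hchain : ∀ n, dist (c n) (c (n + 1)) ≤ r := by
    intro n
    have h1 := hcg n (n + 1) (by omega)
    have h2 : c (n + 1) = (seq (n + 1)).1[n + 1]'(hcidx (n + 1)) := rfl
    have hch : List.IsChain G.Adj (seq (n + 1)).1 := (seq (n + 1)).2.1.2.1
    rw [List.isChain_iff_getElem] at hch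
    have := hch n (by rw [hlen]; omega)
    rw [h1, h2]
    exact this.2
  exact born_of_chain r hr c hchain hinj

noncomputable section

def zt : Equiv.Perm ℤ := Equiv.addRight (1 : ℤ)
def zτ : Equiv.Perm ℤ := Equiv.swap 0 1

lemma zt_mem : zt ∈ Wobbling ℤ := by
  refine ⟨1, fun n => ?_⟩
  simp [zt, Int.dist_eq]

lemma zτ_mem : zτ ∈ Wobbling ℤ := by
  refine ⟨1, fun n => ?_⟩
  simp only [zτ, Equiv.swap_apply_def]
  split_ifs with h1 h2
  · subst h1; simp [Int.dist_eq]
  · subst h2; simp [Int.dist_eq]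
  · simp

lemma zt_pow_apply (k : ℕ) (n : ℤ) : (zt ^ k) n = n + k := by
  induction k with
  | zero => simp
  | succ k ih =>
    rw [pow_succ', Equiv.Perm.mul_apply, ih]
    simp only [zt, Equiv.coe_addRight]
    push_cast
    ring

lemma zt_pow_inv_apply (k : ℕ) (n : ℤ) : (zt ^ k)⁻¹ n = n - k := by
  rw [Equiv.Perm.inv_eq_iff_eq, zt_pow_apply]
  ring

lemma zt_inv_apply (n : ℤ) : zt⁻¹ n = n - 1 := by
  have := zt_pow_inv_apply 1 n
  rwa [pow_one, Nat.cast_one] at this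

lemma zconj_apply (k : ℕ) (n : ℤ) : (zt ^ k * zτ * (zt ^ k)⁻¹) n =
    if n = (k : ℤ) then (k : ℤ) + 1 else if n = (k : ℤ) + 1 then (k : ℤ) else n := by
  simp only [Equiv.Perm.mul_apply, zt_pow_inv_apply, zτ, Equiv.swap_apply_def, zt_pow_apply]
  split_ifs <;> omega

lemma zτ1_apply (n : ℤ) : (zt * zτ * zt⁻¹) n = if n = 1 then 2 else if n = 2 then 1 else n := by
  have happ : ∀ (a b : Equiv.Perm ℤ) (m : ℤ), (a * b) m = a (b m) := fun a b m => rfl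
  rw [happ (zt * zτ) zt⁻¹ n, happ zt zτ _, zt_inv_apply]
  simp only [zτ, Equiv.swap_apply_def, zt, Equiv.coe_addRight]
  split_ifs <;> omega

lemma zg0_apply (n : ℤ) : (zτ * (zt * zτ * zt⁻¹)) n =
    if n = 0 then 1 else if n = 1 then 2 else if n = 2 then 0 else n := by
  rw [Equiv.Perm.mul_apply, zτ1_apply]
  simp only [zτ, Equiv.swap_apply_def]
  split_ifs <;> omega

lemma zg0_ne : (zτ * (zt * zτ * zt⁻¹)) ≠ 1 := by
  intro h
  have h0 := zg0_apply 0
  rw [h] at h0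
  simp at h0

lemma zg0_pow3 : (zτ * (zt * zτ * zt⁻¹)) ^ 3 = 1 := by
  ext n
  have h3 : ∀ (g : Equiv.Perm ℤ) (m : ℤ), (g ^ 3) m = g (g (g m)) := by
    intro g m
    rw [pow_succ, pow_succ, pow_one, Equiv.Perm.mul_apply, Equiv.Perm.mul_apply]
  rw [h3]
  simp only [zg0_apply, Equiv.Perm.one_apply]
  split_ifs <;> omega

lemma zτ_sq : zτ * zτ = 1 := by
  simp [zτ]

lemma zτ1_sq : (zt * zτ * zt⁻¹) * (zt * zτ * zt⁻¹) = 1 := by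
  ext n
  rw [Equiv.Perm.mul_apply, zτ1_apply, zτ1_apply]
  simp only [Equiv.Perm.one_apply]
  split_ifs <;> omega

lemma zcomm (k : ℕ) (hk : 3 ≤ k) :
    (zt ^ k * zτ * (zt ^ k)⁻¹) * (zt * zτ * zt⁻¹) =
      (zt * zτ * zt⁻¹) * (zt ^ k * zτ * (zt ^ k)⁻¹) := by
  have hkz : (3 : ℤ) ≤ (k : ℤ) := by exact_mod_cast hk
  ext n
  have happ : ∀ (a b : Equiv.Perm ℤ) (m : ℤ), (a * b) m = a (b m) := fun a b m => rfl
  rw [happ (zt ^ k * zτ * (zt ^ k)⁻¹) (zt * zτ * zt⁻¹) n,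
    happ (zt * zτ * zt⁻¹) (zt ^ k * zτ * (zt ^ k)⁻¹) n,
    zconj_apply, zτ1_apply, zτ1_apply, zconj_apply]
  split_ifs <;> omega

end

lemma forward_dir {X : Type*} [MetricSpace X] (f : ℤ → X) (hf : Function.Injective f)
    (hb : Bornologous f) :
    ∃ φ : ↥(Wobbling ℤ) →* ↥(Wobbling X), Function.Injective φ := by
  classical
  let ι : ℤ ↪ X := ⟨f, hf⟩
  have hmem : ∀ g : ↥(Wobbling ℤ), (g : Equiv.Perm ℤ).viaEmbedding ι ∈ Wobbling X := by
    rintro ⟨g, r, hr⟩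
    obtain ⟨s, hs⟩ := hb r
    refine ⟨max s 0, fun x => ?_⟩
    by_cases hx : x ∈ Set.range ι
    · obtain ⟨a, rfl⟩ := hx
      have : (g.viaEmbedding ι) (ι a) = ι (g a) := g.viaEmbedding_apply ι a
      rw [this]
      exact le_max_of_le_left (hs a (g a) (hr a))
    · rw [Equiv.Perm.viaEmbedding_apply_of_notMem _ _ _ hx]
      simp
  refine ⟨((Equiv.Perm.viaEmbeddingHom ι).comp (Wobbling ℤ).subtype).codRestrict
      (Wobbling X) (fun g => hmem g), ?_⟩
  intro a b hab
  have : (Equiv.Perm.viaEmbeddingHom ι) (a : Equiv.Perm ℤ) = Equiv.Perm.viaEmbeddingHom ι b :=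
    congrArg Subtype.val hab
  exact Subtype.ext (Equiv.Perm.viaEmbeddingHom_injective ι this)

lemma backward_dir {X : Type*} [MetricSpace X]
    (φ : ↥(Wobbling ℤ) →* ↥(Wobbling X)) (hφ : Function.Injective φ) :
    ∃ f : ℤ → X, Function.Injective f ∧ Bornologous f := by
  classical
  by_contra hno
  let tW : ↥(Wobbling ℤ) := ⟨zt, zt_mem⟩
  let τ0W : ↥(Wobbling ℤ) := ⟨zτ, zτ_mem⟩
  let τ1W : ↥(Wobbling ℤ) := tW * τ0W * tW⁻¹
  let g0W : ↥(Wobbling ℤ) := τ0W * τ1W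
  have hτ1coe : ((τ1W : Equiv.Perm ℤ)) = zt * zτ * zt⁻¹ := rfl
  have hg0coe : ((g0W : Equiv.Perm ℤ)) = zτ * (zt * zτ * zt⁻¹) := by
    show ((τ0W * τ1W : ↥(Wobbling ℤ)) : Equiv.Perm ℤ) = _
    rw [Subgroup.coe_mul, hτ1coe]
  have hg0ne : g0W ≠ 1 := by
    intro h
    apply zg0_ne
    rw [← hg0coe, h]
    rfl
  have hg03 : g0W ^ 3 = 1 := by
    apply Subtype.ext
    rw [SubgroupClass.coe_pow, hg0coe]
    exact zg0_pow3
  have hτ0sq : τ0W * τ0W = 1 := by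
    apply Subtype.ext
    rw [Subgroup.coe_mul]
    exact zτ_sq
  have hτ1sq : τ1W * τ1W = 1 := by
    apply Subtype.ext
    rw [Subgroup.coe_mul, hτ1coe]
    exact zτ1_sq
  -- images in Perm X
  let β : Equiv.Perm X := ((φ tW : ↥(Wobbling X)) : Equiv.Perm X)
  let A : Equiv.Perm X := ((φ τ0W : ↥(Wobbling X)) : Equiv.Perm X)
  let Bp : Equiv.Perm X := ((φ τ1W : ↥(Wobbling X)) : Equiv.Perm X)
  let E : Equiv.Perm X := ((φ g0W : ↥(Wobbling X)) : Equiv.Perm X)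
  obtain ⟨rβ, hrβ⟩ := (φ tW).2
  obtain ⟨rA, hrA⟩ := (φ τ0W).2
  set r : ℝ := max 0 (max rβ rA) with hrdef
  have hβr : ∀ y : X, dist y (β y) ≤ r :=
    fun y => le_trans (hrβ y) (le_max_of_le_right (le_max_left _ _))
  have hAr : ∀ y : X, dist y (A y) ≤ r :=
    fun y => le_trans (hrA y) (le_max_of_le_right (le_max_right _ _))
  have hBpeq : Bp = β * A * β⁻¹ := by
    show ((φ (tW * τ0W * tW⁻¹) : ↥(Wobbling X)) : Equiv.Perm X) = _
    rw [map_mul, map_mul, map_inv, Subgroup.coe_mul, Subgroup.coe_mul, InvMemClass.coe_inv]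
  have hEeq : E = A * Bp := by
    show ((φ (τ0W * τ1W) : ↥(Wobbling X)) : Equiv.Perm X) = _
    rw [map_mul, Subgroup.coe_mul]
  have hAsq : ∀ z : X, A (A z) = z := by
    intro z
    have h1 : φ τ0W * φ τ0W = 1 := by rw [← map_mul, hτ0sq, map_one]
    have h2 : A * A = 1 := by
      show ((φ τ0W : ↥(Wobbling X)) : Equiv.Perm X) * _ = _
      rw [← Subgroup.coe_mul, h1]
      rfl
    have := DFunLike.congr_fun h2 z
    simpa [Equiv.Perm.mul_apply] using this
  have hBpsq : ∀ z : X, Bp (Bp z) = z := by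
    intro z
    have h1 : φ τ1W * φ τ1W = 1 := by rw [← map_mul, hτ1sq, map_one]
    have h2 : Bp * Bp = 1 := by
      show ((φ τ1W : ↥(Wobbling X)) : Equiv.Perm X) * _ = _
      rw [← Subgroup.coe_mul, h1]
      rfl
    have := DFunLike.congr_fun h2 z
    simpa [Equiv.Perm.mul_apply] using this
  have hE3 : ∀ z : X, E (E (E z)) = z := by
    intro z
    have h1 : φ g0W ^ 3 = 1 := by rw [← map_pow, hg03, map_one]
    have h2 : E ^ 3 = 1 := by
      show ((φ g0W : ↥(Wobbling X)) : Equiv.Perm X) ^ 3 = _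
      rw [← SubgroupClass.coe_pow, h1]
      rfl
    have h3 : E (E (E z)) = (E ^ 3) z := by
      rw [pow_succ, pow_succ, pow_one, Equiv.Perm.mul_apply, Equiv.Perm.mul_apply]
    rw [h3, h2]
    rfl
  -- the main pointwise argument
  have hEx : ∀ x : X, E x = x := by
    intro x
    set C : Set X := {y | Relation.ReflTransGen (fun a b : X => dist a b ≤ r) x y} with hCdef
    have hCfin : C.Finite := by
      rcases Set.finite_or_infinite C with h | h
      · exact h
      · exact absurd (born_of_infinite_component r x h) hno
    have hxC : x ∈ C := Relation.ReflTransGen.refl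
    have hpres : ∀ (γ : Equiv.Perm X), (∀ y : X, dist y (γ y) ≤ r) → ∀ y ∈ C, γ y ∈ C :=
      fun γ hγ y hy => Relation.ReflTransGen.tail hy (hγ y)
    have hβinvr : ∀ y : X, dist y (β⁻¹ y) ≤ r := by
      intro y
      have := hβr (β⁻¹ y)
      rwa [Equiv.Perm.inv_def, Equiv.apply_symm_apply, dist_comm] at this
    have hβC := hpres β hβr
    have hβinvC := hpres β⁻¹ hβinvr
    have hAC := hpres A hAr
    have hβiff : ∀ y : X, y ∈ C ↔ β y ∈ C := by
      intro y
      constructor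
      · exact hβC y
      · intro h
        have := hβinvC (β y) h
        rwa [Equiv.Perm.inv_def, Equiv.symm_apply_apply] at this
    haveI : Finite ↥C := hCfin.to_subtype
    let π : Equiv.Perm ↥C := Equiv.Perm.subtypePerm β (fun y => (hβiff y).symm)
    obtain ⟨k₀, hk₀pos, hk₀⟩ := isOfFinOrder_iff_pow_eq_one.mp (isOfFinOrder_of_finite π)
    set k : ℕ := 3 * k₀ with hkdef
    have hk3 : 3 ≤ k := by omega
    have hπk : π ^ k = 1 := by rw [hkdef, mul_comm, pow_mul, hk₀, one_pow]
    have hkβ : ∀ y, ∀ hy : y ∈ C, (β ^ k : Equiv.Perm X) y = y := by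
      intro y hy
      have h1 : (π ^ k) ⟨y, hy⟩ = ⟨y, hy⟩ := by rw [hπk]; rfl
      rw [show π = Equiv.Perm.subtypePerm β (fun y => (hβiff y).symm) from rfl, Equiv.Perm.subtypePerm_pow] at h1
      have := congrArg Subtype.val h1
      simpa using this
    have hiter : ∀ (γ : Equiv.Perm X), (∀ y ∈ C, γ y ∈ C) →
        ∀ (m : ℕ), ∀ y ∈ C, (γ ^ m : Equiv.Perm X) y ∈ C := by
      intro γ hγ m
      induction m with
      | zero => intro y hy; simpa using hy
      | succ m ih =>
        intro y hy
        rw [pow_succ, Equiv.Perm.mul_apply]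
        exact ih (γ y) (hγ y hy)
    have hkβinv : ∀ y ∈ C, ((β ^ k)⁻¹ : Equiv.Perm X) y = y := by
      intro y hy
      have hw : ((β ^ k)⁻¹ : Equiv.Perm X) y ∈ C := by
        rw [← inv_pow]
        exact hiter β⁻¹ hβinvC k y hy
      have := hkβ _ hw
      rw [Equiv.Perm.inv_def, Equiv.apply_symm_apply] at this
      exact this.symm
    -- A' agrees with A on C and commutes with Bp
    let τkW : ↥(Wobbling ℤ) := tW ^ k * τ0W * (tW ^ k)⁻¹
    let A' : Equiv.Perm X := ((φ τkW : ↥(Wobbling X)) : Equiv.Perm X)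
    have hA'eq : A' = β ^ k * A * (β ^ k)⁻¹ := by
      show ((φ (tW ^ k * τ0W * (tW ^ k)⁻¹) : ↥(Wobbling X)) : Equiv.Perm X) = _
      rw [map_mul, map_mul, map_inv, map_pow, Subgroup.coe_mul, Subgroup.coe_mul,
        InvMemClass.coe_inv, SubgroupClass.coe_pow]
    have claim1 : ∀ y ∈ C, A' y = A y := by
      intro y hy
      rw [hA'eq, Equiv.Perm.mul_apply, Equiv.Perm.mul_apply, hkβinv y hy]
      exact hkβ (A y) (hAC y hy)
    have hτkcoe : ((τkW : Equiv.Perm ℤ)) = zt ^ k * zτ * (zt ^ k)⁻¹ := by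
      show ((tW ^ k * τ0W * (tW ^ k)⁻¹ : ↥(Wobbling ℤ)) : Equiv.Perm ℤ) = _
      rw [Subgroup.coe_mul, Subgroup.coe_mul, InvMemClass.coe_inv, SubgroupClass.coe_pow]
    have hcommW : τkW * τ1W = τ1W * τkW := by
      have h1 : ((τkW * τ1W : ↥(Wobbling ℤ)) : Equiv.Perm ℤ) =
          (zt ^ k * zτ * (zt ^ k)⁻¹) * (zt * zτ * zt⁻¹) := by
        rw [Subgroup.coe_mul, hτkcoe, hτ1coe]
      have h2 : ((τ1W * τkW : ↥(Wobbling ℤ)) : Equiv.Perm ℤ) =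
          (zt * zτ * zt⁻¹) * (zt ^ k * zτ * (zt ^ k)⁻¹) := by
        rw [Subgroup.coe_mul, hτkcoe, hτ1coe]
      apply Subtype.ext
      rw [h1, h2]
      exact zcomm k hk3
    have hcommX : A' * Bp = Bp * A' := by
      show ((φ τkW : ↥(Wobbling X)) : Equiv.Perm X) * _ = _
      rw [← Subgroup.coe_mul, ← Subgroup.coe_mul, ← map_mul, ← map_mul, hcommW]
    have hBpC : ∀ y ∈ C, Bp y ∈ C := by
      intro y hy
      have : Bp y = β (A (β⁻¹ y)) := by rw [hBpeq]; rfl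
      rw [this]
      exact hβC _ (hAC _ (hβinvC y hy))
    have hEform : ∀ y ∈ C, E y = Bp (A y) := by
      intro y hy
      have h1 : E y = A (Bp y) := by rw [hEeq]; rfl
      have h2 : A (Bp y) = A' (Bp y) := (claim1 _ (hBpC y hy)).symm
      have h3 : A' (Bp y) = Bp (A' y) := by
        have := DFunLike.congr_fun hcommX y
        simpa [Equiv.Perm.mul_apply] using this
      rw [h1, h2, h3, claim1 y hy]
    have hEinv : E (E x) = x := by
      rw [hEform x hxC]
      have h4 : E (Bp (A x)) = A (Bp (Bp (A x))) := by rw [hEeq]; rfl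
      rw [h4, hBpsq, hAsq]
    have h1 := hE3 x
    rw [hEinv] at h1
    exact h1
  have hone : φ g0W = 1 := by
    apply Subtype.ext
    apply Equiv.ext
    intro x
    exact hEx x
  exact hg0ne (hφ (by rw [hone, map_one]))

/-- A metric space `X` admits a bornologous injection of `ℤ` if and
only if `W(ℤ)` embeds into `W(X)`. -/
theorem stmt_16 {X : Type*} [MetricSpace X] :
    (∃ f : ℤ → X, Function.Injective f ∧ Bornologous f) ↔
      ∃ φ : ↥(Wobbling ℤ) →* ↥(Wobbling X), Function.Injective φ := by
  constructor
  · rintro ⟨f, hf, hb⟩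
    exact forward_dir f hf hb
  · rintro ⟨φ, hφ⟩
    exact backward_dir φ hφ
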